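/- The branch class on the infinite (k+1)-ary tree has k-monotone dimension 1: Let k ≥ 2 and let V be the set of all finite strings over {0,…,k} (the vertices of the infinite complete (k+1)-ary tree). For each infinite branch B ∈ {0,…,k}^ℕ define c_B : V → {0,…,k} by c_B(σ) = B_{|σ|} if σ = (B_0, B_1, …, B_{|σ|−1}) is a prefix of B, and c_B(σ) = 0 otherwise. Then there do not exist two distinct vertices σ_1, σ_2 ∈ V such that for every label y ∈ {0,…,k} there is a branch B with c_B(σ_1) = y and c_B(σ_2) = y. In other words, the class {c_B : B ∈ {0,…,k}^ℕ} does not contain all k+1 constant functions restricted to any pair of distinct vertices. -/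
import Mathlib


namespace Stmt15

/-- The concept associated to an infinite branch `B` of the infinite complete `(k+1)`-ary
tree: a vertex `σ` on the branch is labeled by the next branch direction `B_{|σ|}`, and
vertices off the branch are labeled `0`. -/
def cB {k : ℕ} (B : ℕ → Fin (k+1)) (σ : List (Fin (k+1))) : Fin (k+1) :=
  if σ = (List.range σ.length).map B then B σ.length else 0

lemma cB_key {k : ℕ} (B : ℕ → Fin (k+1)) (σ : List (Fin (k+1))) (y : Fin (k+1))
    (hy : y.val ≠ 0) (h : cB B σ = y) :
    σ = (List.range σ.length).map B ∧ B σ.length = y := by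
  unfold cB at h
  split at h
  · exact ⟨by assumption, h⟩
  · exact absurd (congrArg Fin.val h.symm) hy

/-- The branch class on the infinite `(k+1)`-ary tree has `k`-monotone dimension 1: the class
`{c_B}` does not contain all `k+1` constant functions restricted to any pair of distinct
vertices. -/
theorem stmt15 (k : ℕ) (hk : 2 ≤ k) :
    ¬ ∃ σ₁ σ₂ : List (Fin (k+1)), σ₁ ≠ σ₂ ∧
      ∀ y : Fin (k+1), ∃ B : ℕ → Fin (k+1), cB B σ₁ = y ∧ cB B σ₂ = y := by
  rintro ⟨σ₁, σ₂, hne, h⟩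
  obtain ⟨B₁, h11, h12⟩ := h ⟨1, by omega⟩
  obtain ⟨B₂, h21, h22⟩ := h ⟨2, by omega⟩
  obtain ⟨e1, f1⟩ := cB_key B₁ σ₁ _ (by simp) h11
  obtain ⟨e2, f2⟩ := cB_key B₁ σ₂ _ (by simp) h12
  obtain ⟨e3, f3⟩ := cB_key B₂ σ₁ _ (by simp) h21
  obtain ⟨e4, f4⟩ := cB_key B₂ σ₂ _ (by simp) h22
  have hlen : σ₁.length ≠ σ₂.length := by
    intro hl
    apply hne
    rw [e1, e2, hl]
  rcases lt_or_gt_of_ne hlen with hlt | hlt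
  · have hA : σ₂[σ₁.length]'hlt = B₁ σ₁.length := by
      rw [List.getElem_of_eq e2]
      simp
    have hB : σ₂[σ₁.length]'hlt = B₂ σ₁.length := by
      rw [List.getElem_of_eq e4]
      simp
    rw [f1] at hA
    rw [f3] at hB
    rw [hA] at hB
    exact absurd (congrArg Fin.val hB) (by simp)
  · have hA : σ₁[σ₂.length]'hlt = B₁ σ₂.length := by
      rw [List.getElem_of_eq e1]
      simp
    have hB : σ₁[σ₂.length]'hlt = B₂ σ₂.length := by
      rw [List.getElem_of_eq e3]
      simp
    rw [f2] at hA
    rw [f4] at hB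
    rw [hA] at hB
    exact absurd (congrArg Fin.val hB) (by simp)

end Stmt15
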